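/- In the wreath product P = ℤ/4 ≀ ℤ/2 with base group Q = ⟨x, y⟩ ≅ ℤ/4 × ℤ/4 and swapping element z, let Y = ⟨xy, x², z⟩. Then the three subgroups Q₁ = ⟨xy, x²⟩, Q₂ = ⟨xy, x²z⟩, Q₃ = ⟨xy, z⟩ of Y are pairwise distinct subgroups of Y of index 2, and among them only Q₁ is contained in Q. -/

import Mathlib

structure KK where
  a : ZMod 4
  b : ZMod 4
  c : ZMod 2
deriving DecidableEq, Fintype

namespace KK

instance : One KK := ⟨⟨0, 0, 0⟩⟩
instance : Mul KK := ⟨fun p q =>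
  if p.c = 0 then ⟨p.a + q.a, p.b + q.b, q.c⟩ else ⟨p.a + q.b, p.b + q.a, 1 + q.c⟩⟩
instance : Inv KK := ⟨fun p => if p.c = 0 then ⟨-p.a, -p.b, 0⟩ else ⟨-p.b, -p.a, 1⟩⟩

lemma mul_def (p q : KK) : p * q =
    if p.c = 0 then ⟨p.a + q.a, p.b + q.b, q.c⟩ else ⟨p.a + q.b, p.b + q.a, 1 + q.c⟩ := rfl

lemma one_def : (1 : KK) = ⟨0, 0, 0⟩ := rfl

lemma inv_def (p : KK) : p⁻¹ = if p.c = 0 then (⟨-p.a, -p.b, 0⟩ : KK) else ⟨-p.b, -p.a, 1⟩ := rfl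

lemma two_cases (c : ZMod 2) : c = 0 ∨ c = 1 := by revert c; decide

lemma not10 : ¬ ((1 : ZMod 2) = 0) := by decide
lemma h110 : (1 : ZMod 2) + 1 = 0 := by decide

lemma mul_assoc'' (p q r : KK) : p * q * r = p * (q * r) := by
  obtain ⟨a1, b1, c1⟩ := p; obtain ⟨a2, b2, c2⟩ := q; obtain ⟨a3, b3, c3⟩ := r
  rcases two_cases c1 with rfl | rfl <;> rcases two_cases c2 with rfl | rfl <;>
    simp [mul_def, if_pos, if_neg not10, h110, add_assoc, add_comm, add_left_comm]

instance : Group KK where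
  mul := (· * ·)
  one := 1
  inv := (·⁻¹)
  mul_assoc := mul_assoc''
  one_mul := by rintro ⟨a, b, c⟩; simp [mul_def, one_def]
  mul_one := by
    rintro ⟨a, b, c⟩
    rcases two_cases c with rfl | rfl <;>
      simp [mul_def, one_def, if_pos, if_neg not10, h110]
  inv_mul_cancel := by
    rintro ⟨a, b, c⟩
    rcases two_cases c with rfl | rfl <;>
      simp [mul_def, one_def, inv_def, if_pos, if_neg not10, h110]



def gx : KK := ⟨1, 0, 0⟩
def gy : KK := ⟨0, 1, 0⟩
def g1 : KK := ⟨1, 1, 0⟩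
def g2 : KK := ⟨2, 0, 0⟩
def g3 : KK := ⟨0, 0, 1⟩
def g4 : KK := ⟨2, 0, 1⟩

def S0 : Subgroup KK where
  carrier := {p | p.c = 0}
  one_mem' := by decide
  mul_mem' {p q} := by revert p q; decide
  inv_mem' {p} := by revert p; decide

def H1 : Subgroup KK where
  carrier := {p | p.c = 0 ∧ 2 * (p.a - p.b) = 0}
  one_mem' := by decide
  mul_mem' {p q} := by revert p q; decide
  inv_mem' {p} := by revert p; decide

def H2 : Subgroup KK where
  carrier := {p | p.a - p.b = if p.c = 0 then 0 else 2}
  one_mem' := by decide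
  mul_mem' {p q} := by revert p q; decide
  inv_mem' {p} := by revert p; decide

def H3 : Subgroup KK where
  carrier := {p | p.a = p.b}
  one_mem' := by decide
  mul_mem' {p q} := by revert p q; decide
  inv_mem' {p} := by revert p; decide

def HY : Subgroup KK where
  carrier := {p | 2 * (p.a - p.b) = 0}
  one_mem' := by decide
  mul_mem' {p q} := by revert p q; decide
  inv_mem' {p} := by revert p; decide



instance : DecidablePred (· ∈ H1) := fun p =>
  decidable_of_iff (p.c = 0 ∧ 2 * (p.a - p.b) = 0) Iff.rfl
instance : DecidablePred (· ∈ H2) := fun p =>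
  decidable_of_iff (p.a - p.b = if p.c = 0 then 0 else 2) Iff.rfl
instance : DecidablePred (· ∈ H3) := fun p =>
  decidable_of_iff (p.a = p.b) Iff.rfl
instance : DecidablePred (· ∈ HY) := fun p =>
  decidable_of_iff (2 * (p.a - p.b) = 0) Iff.rfl

lemma cardH1 : Nat.card H1 = 8 := by
  rw [Nat.card_eq_fintype_card]; decide
lemma cardH2 : Nat.card H2 = 8 := by
  rw [Nat.card_eq_fintype_card]; decide
lemma cardH3 : Nat.card H3 = 8 := by
  rw [Nat.card_eq_fintype_card]; decide
lemma cardHY : Nat.card HY = 16 := by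
  rw [Nat.card_eq_fintype_card]; decide

lemma decomp1 : ∀ p : KK, p ∈ H1 → ∃ i j : Fin 4, p = g1 ^ (i : ℕ) * g2 ^ (j : ℕ) := by decide



instance : DecidablePred (· ∈ S0) := fun p => decidable_of_iff (p.c = 0) Iff.rfl

lemma decomp2 : ∀ p : KK, p ∈ H2 → ∃ (i : Fin 4) (j : Fin 2),
    p = g1 ^ (i : ℕ) * g4 ^ (j : ℕ) := by decide
lemma decomp3 : ∀ p : KK, p ∈ H3 → ∃ (i : Fin 4) (j : Fin 2),
    p = g1 ^ (i : ℕ) * g3 ^ (j : ℕ) := by decide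
lemma decompY : ∀ p : KK, p ∈ HY → ∃ (i : Fin 4) (j : Fin 2) (k : Fin 2),
    p = g1 ^ (i : ℕ) * g2 ^ (j : ℕ) * g3 ^ (k : ℕ) := by decide

lemma closure1 : Subgroup.closure {g1, g2} = H1 := by
  apply le_antisymm
  · rw [Subgroup.closure_le]
    rintro p (rfl | rfl) <;> rw [SetLike.mem_coe] <;> decide
  · intro p hp
    obtain ⟨i, j, rfl⟩ := decomp1 p hp
    exact mul_mem (pow_mem (Subgroup.subset_closure (by simp)) _)
      (pow_mem (Subgroup.subset_closure (by simp)) _)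

lemma closure2 : Subgroup.closure {g1, g4} = H2 := by
  apply le_antisymm
  · rw [Subgroup.closure_le]
    rintro p (rfl | rfl) <;> rw [SetLike.mem_coe] <;> decide
  · intro p hp
    obtain ⟨i, j, rfl⟩ := decomp2 p hp
    exact mul_mem (pow_mem (Subgroup.subset_closure (by simp)) _)
      (pow_mem (Subgroup.subset_closure (by simp)) _)

lemma closure3 : Subgroup.closure {g1, g3} = H3 := by
  apply le_antisymm
  · rw [Subgroup.closure_le]
    rintro p (rfl | rfl) <;> rw [SetLike.mem_coe] <;> decide
  · intro p hp
    obtain ⟨i, j, rfl⟩ := decomp3 p hp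
    exact mul_mem (pow_mem (Subgroup.subset_closure (by simp)) _)
      (pow_mem (Subgroup.subset_closure (by simp)) _)

lemma closureY : Subgroup.closure {g1, g2, g3} = HY := by
  apply le_antisymm
  · rw [Subgroup.closure_le]
    rintro p (rfl | rfl | rfl) <;> rw [SetLike.mem_coe] <;> decide
  · intro p hp
    obtain ⟨i, j, k, rfl⟩ := decompY p hp
    exact mul_mem (mul_mem (pow_mem (Subgroup.subset_closure (by simp)) _)
      (pow_mem (Subgroup.subset_closure (by simp)) _))
      (pow_mem (Subgroup.subset_closure (by simp)) _)

lemma closureQ_le : Subgroup.closure {gx, gy} ≤ S0 := by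
  rw [Subgroup.closure_le]
  rintro p (rfl | rfl) <;> rw [SetLike.mem_coe] <;> decide

lemma g4_not_S0 : g4 ∉ S0 := by decide
lemma g3_not_S0 : g3 ∉ S0 := by decide
lemma g3_not_H2 : g3 ∉ H2 := by decide
lemma closure1_le_S0 : Subgroup.closure {g1, g2} ≤ S0 := by
  rw [Subgroup.closure_le]
  rintro p (rfl | rfl) <;> rw [SetLike.mem_coe] <;> decide

lemma cardKK : Nat.card KK = 32 := by rw [Nat.card_eq_fintype_card]; decide



section Hom

variable {P : Type} [Group P] (x y z : P)

def toP (p : KK) : P := x ^ p.a.val * y ^ p.b.val * z ^ p.c.val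

variable (hx : x ^ 4 = 1) (hy : y ^ 4 = 1) (hz : z ^ 2 = 1)
  (hxy : x * y = y * x) (hzx : z * x * z = y)

include hz hzx in
lemma hzx' : z * x = y * z := by
  have h1 : z * z = 1 := by rw [← pow_two]; exact hz
  have := congrArg (· * z) hzx
  simpa [mul_assoc, h1] using this

include hz hzx in
lemma hzy' : z * y = x * z := by
  have h1 : z * z = 1 := by rw [← pow_two]; exact hz
  rw [← hzx]
  calc z * (z * x * z) = (z * z) * (x * z) := by simp [mul_assoc]
    _ = x * z := by rw [h1, one_mul]

include hxy in
lemma hyx_pow (k j : ℕ) : y ^ j * x ^ k = x ^ k * y ^ j :=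
  ((Commute.pow_pow (hxy : Commute x y) k j)).symm.eq

include hxy in
lemma rearr (i j k l : ℕ) :
    (x ^ i * y ^ j) * (x ^ k * y ^ l) = x ^ (i + k) * y ^ (j + l) := by
  rw [pow_add, pow_add, mul_assoc, ← mul_assoc (y ^ j) (x ^ k) (y ^ l),
    hyx_pow x y hxy k j, mul_assoc (x ^ k), ← mul_assoc]

include hxy in
lemma rearr2 (i j k l : ℕ) :
    (x ^ i * y ^ j) * (y ^ k * x ^ l) = x ^ (i + l) * y ^ (j + k) := by
  rw [pow_add, pow_add, mul_assoc, ← mul_assoc (y ^ j) (y ^ k) (x ^ l), ← pow_add,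
    hyx_pow x y hxy l (j + k), ← mul_assoc]

include hx hy hz hxy hzx in
lemma toP_mul (p q : KK) : toP x y z (p * q) = toP x y z p * toP x y z q := by
  have sxz : SemiconjBy z x y := hzx' x y z hz hzx
  have syz : SemiconjBy z y x := hzy' x y z hz hzx
  have sx : ∀ n : ℕ, z * x ^ n = y ^ n * z := fun n => (sxz.pow_right n).eq
  have sy : ∀ n : ℕ, z * y ^ n = x ^ n * z := fun n => (syz.pow_right n).eq
  have xm : ∀ m : ℕ, x ^ (m % 4) = x ^ m := fun m => (pow_eq_pow_mod m hx).symm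
  have ym : ∀ m : ℕ, y ^ (m % 4) = y ^ m := fun m => (pow_eq_pow_mod m hy).symm
  have zm : ∀ m : ℕ, z ^ (m % 2) = z ^ m := fun m => (pow_eq_pow_mod m hz).symm
  obtain ⟨a1, b1, c1⟩ := p; obtain ⟨a2, b2, c2⟩ := q
  rcases two_cases c1 with rfl | rfl
  · show toP x y z ⟨a1 + a2, b1 + b2, c2⟩ = _
    unfold toP
    simp only [ZMod.val_add, xm, ym]
    show x ^ (a1.val + a2.val) * y ^ (b1.val + b2.val) * z ^ c2.val =
      x ^ a1.val * y ^ b1.val * z ^ (0 : ZMod 2).val * (x ^ a2.val * y ^ b2.val * z ^ c2.val)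
    rw [show ((0 : ZMod 2)).val = 0 from rfl, pow_zero, mul_one,
      ← mul_assoc, rearr x y hxy]
  · show toP x y z ⟨a1 + b2, b1 + a2, 1 + c2⟩ = _
    unfold toP
    simp only [ZMod.val_add, xm, ym, zm]
    show x ^ (a1.val + b2.val) * y ^ (b1.val + a2.val) * z ^ (1 + c2.val) =
      x ^ a1.val * y ^ b1.val * z ^ (1 : ZMod 2).val * (x ^ a2.val * y ^ b2.val * z ^ c2.val)
    rw [show ((1 : ZMod 2)).val = 1 from rfl, pow_one]
    calc x ^ (a1.val + b2.val) * y ^ (b1.val + a2.val) * z ^ (1 + c2.val)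
        = (x ^ a1.val * y ^ b1.val) * (y ^ a2.val * x ^ b2.val) * (z * z ^ c2.val) := by
          rw [rearr2 x y hxy, pow_add z 1 c2.val, pow_one z]
      _ = x ^ a1.val * y ^ b1.val * (y ^ a2.val * (x ^ b2.val * z) * z ^ c2.val) := by
          simp only [mul_assoc]
      _ = x ^ a1.val * y ^ b1.val * (y ^ a2.val * (z * y ^ b2.val) * z ^ c2.val) := by
          rw [sy]
      _ = x ^ a1.val * y ^ b1.val * ((y ^ a2.val * z) * (y ^ b2.val * z ^ c2.val)) := by
          simp only [mul_assoc]
      _ = x ^ a1.val * y ^ b1.val * ((z * x ^ a2.val) * (y ^ b2.val * z ^ c2.val)) := by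
          rw [sx]
      _ = x ^ a1.val * y ^ b1.val * z * (x ^ a2.val * y ^ b2.val * z ^ c2.val) := by
          simp only [mul_assoc]

include hx hy hz hxy hzx in
def F : KK →* P where
  toFun := toP x y z
  map_one' := by
    show x ^ (0 : ZMod 4).val * y ^ (0 : ZMod 4).val * z ^ (0 : ZMod 2).val = 1
    simp
  map_mul' := toP_mul x y z hx hy hz hxy hzx

end Hom

end KK


/-- In `P = ℤ/4 ≀ ℤ/2` with base group `Q = ⟨x,y⟩` and swapping element `z`, the subgroups
`Q₁ = ⟨xy, x²⟩`, `Q₂ = ⟨xy, x²z⟩`, `Q₃ = ⟨xy, z⟩` of `Y = ⟨xy, x², z⟩` are pairwise distinct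
of index 2 in `Y`, and among them only `Q₁` is contained in `Q`. -/
theorem stmt10 (P : Type) [Group P] (x y z : P)
    (hx : x ^ 4 = 1) (hy : y ^ 4 = 1) (hz : z ^ 2 = 1)
    (hxy : x * y = y * x) (hzx : z * x * z = y)
    (hgen : Subgroup.closure {x, y, z} = ⊤)
    (hcard : Nat.card P = 32) :
    let Q : Subgroup P := Subgroup.closure {x, y}
    let Y : Subgroup P := Subgroup.closure {x * y, x ^ 2, z}
    let Q1 : Subgroup P := Subgroup.closure {x * y, x ^ 2}
    let Q2 : Subgroup P := Subgroup.closure {x * y, x ^ 2 * z}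
    let Q3 : Subgroup P := Subgroup.closure {x * y, z}
    Q1 ≠ Q2 ∧ Q1 ≠ Q3 ∧ Q2 ≠ Q3
    ∧ Q1 ≤ Y ∧ Q2 ≤ Y ∧ Q3 ≤ Y
    ∧ Q1.relIndex Y = 2 ∧ Q2.relIndex Y = 2 ∧ Q3.relIndex Y = 2
    ∧ Q1 ≤ Q ∧ ¬ Q2 ≤ Q ∧ ¬ Q3 ≤ Q := by
  intro Q Y Q1 Q2 Q3
  set f := KK.F x y z hx hy hz hxy hzx with hf
  have fval : ∀ p : KK, f p = x ^ p.a.val * y ^ p.b.val * z ^ p.c.val := fun p => rfl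
  have v1 : ((1 : ZMod 4)).val = 1 := rfl
  have v2 : ((2 : ZMod 4)).val = 2 := rfl
  have v0 : ((0 : ZMod 4)).val = 0 := rfl
  have w1 : ((1 : ZMod 2)).val = 1 := rfl
  have w0 : ((0 : ZMod 2)).val = 0 := rfl
  have fgx : f KK.gx = x := by rw [fval]; show x ^ (1:ZMod 4).val * y ^ (0:ZMod 4).val * z ^ (0:ZMod 2).val = x; rw [v1, v0, w0]; simp
  have fgy : f KK.gy = y := by rw [fval]; show x ^ (0:ZMod 4).val * y ^ (1:ZMod 4).val * z ^ (0:ZMod 2).val = y; rw [v1, v0, w0]; simp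
  have fg1 : f KK.g1 = x * y := by rw [fval]; show x ^ (1:ZMod 4).val * y ^ (1:ZMod 4).val * z ^ (0:ZMod 2).val = x * y; rw [v1, w0]; simp
  have fg2 : f KK.g2 = x ^ 2 := by rw [fval]; show x ^ (2:ZMod 4).val * y ^ (0:ZMod 4).val * z ^ (0:ZMod 2).val = x ^ 2; rw [v2, v0, w0]; simp
  have fg3 : f KK.g3 = z := by rw [fval]; show x ^ (0:ZMod 4).val * y ^ (0:ZMod 4).val * z ^ (1:ZMod 2).val = z; rw [v0, w1]; simp
  have fg4 : f KK.g4 = x ^ 2 * z := by rw [fval]; show x ^ (2:ZMod 4).val * y ^ (0:ZMod 4).val * z ^ (1:ZMod 2).val = x ^ 2 * z; rw [v2, v0, w1]; simp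
  have hsurj : Function.Surjective f := by
    rw [← MonoidHom.range_eq_top]
    rw [eq_top_iff, ← hgen, Subgroup.closure_le]
    rintro p (rfl | rfl | rfl)
    · exact ⟨KK.gx, fgx⟩
    · exact ⟨KK.gy, fgy⟩
    · exact ⟨KK.g3, fg3⟩
  have hbij : Function.Bijective f :=
    (Nat.bijective_iff_surjective_and_card f).mpr ⟨hsurj, by rw [KK.cardKK, hcard]⟩
  have hinj : Function.Injective f := hbij.1
  have hm1 : Q1 = Subgroup.map f KK.H1 := by
    rw [← KK.closure1, MonoidHom.map_closure, Set.image_insert_eq, Set.image_singleton,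
      fg1, fg2]
  have hm2 : Q2 = Subgroup.map f KK.H2 := by
    rw [← KK.closure2, MonoidHom.map_closure, Set.image_insert_eq, Set.image_singleton,
      fg1, fg4]
  have hm3 : Q3 = Subgroup.map f KK.H3 := by
    rw [← KK.closure3, MonoidHom.map_closure, Set.image_insert_eq, Set.image_singleton,
      fg1, fg3]
  have hmY : Y = Subgroup.map f KK.HY := by
    rw [← KK.closureY, MonoidHom.map_closure, Set.image_insert_eq, Set.image_insert_eq,
      Set.image_singleton, fg1, fg2, fg3]
  have hmQ : Q = Subgroup.map f (Subgroup.closure {KK.gx, KK.gy}) := by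
    rw [MonoidHom.map_closure, Set.image_insert_eq, Set.image_singleton, fgx, fgy]
  -- memberships of images
  have memg4Q2 : f KK.g4 ∈ Q2 := by
    rw [fg4]; exact Subgroup.subset_closure (Set.mem_insert_of_mem _ rfl)
  have memg3Q3 : f KK.g3 ∈ Q3 := by
    rw [fg3]; exact Subgroup.subset_closure (Set.mem_insert_of_mem _ rfl)
  have g4H1 : KK.g4 ∉ KK.H1 := by decide
  have g3H1 : KK.g3 ∉ KK.H1 := by decide
  have g3H2 : KK.g3 ∉ KK.H2 := by decide
  have hQ1Q2 : Q1 ≠ Q2 := by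
    intro h
    have h4 : f KK.g4 ∈ Q1 := h ▸ memg4Q2
    rw [hm1, Subgroup.mem_map_iff_mem hinj] at h4
    exact g4H1 h4
  have hQ1Q3 : Q1 ≠ Q3 := by
    intro h
    have h4 : f KK.g3 ∈ Q1 := h ▸ memg3Q3
    rw [hm1, Subgroup.mem_map_iff_mem hinj] at h4
    exact g3H1 h4
  have hQ2Q3 : Q2 ≠ Q3 := by
    intro h
    have h4 : f KK.g3 ∈ Q2 := h ▸ memg3Q3
    rw [hm2, Subgroup.mem_map_iff_mem hinj] at h4
    exact g3H2 h4
  -- inclusions in Y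
  have hxyY : x * y ∈ Y := Subgroup.subset_closure (Set.mem_insert _ _)
  have hx2Y : x ^ 2 ∈ Y := Subgroup.subset_closure (Set.mem_insert_of_mem _ (Set.mem_insert _ _))
  have hzY : z ∈ Y := Subgroup.subset_closure (Set.mem_insert_of_mem _ (Set.mem_insert_of_mem _ rfl))
  have hQ1Y : Q1 ≤ Y := by
    rw [Subgroup.closure_le]; rintro p (rfl | rfl); exacts [hxyY, hx2Y]
  have hQ2Y : Q2 ≤ Y := by
    rw [Subgroup.closure_le]; rintro p (rfl | rfl); exacts [hxyY, mul_mem hx2Y hzY]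
  have hQ3Y : Q3 ≤ Y := by
    rw [Subgroup.closure_le]; rintro p (rfl | rfl); exacts [hxyY, hzY]
  -- cards
  have cardmap : ∀ (H : Subgroup KK), Nat.card (Subgroup.map f H) = Nat.card H := fun H =>
    (Nat.card_congr (Subgroup.equivMapOfInjective H f hinj).toEquiv).symm
  have cY : Nat.card Y = 16 := by rw [hmY, cardmap, KK.cardHY]
  have c1 : Nat.card Q1 = 8 := by rw [hm1, cardmap, KK.cardH1]
  have c2 : Nat.card Q2 = 8 := by rw [hm2, cardmap, KK.cardH2]
  have c3 : Nat.card Q3 = 8 := by rw [hm3, cardmap, KK.cardH3]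
  have relind : ∀ (A : Subgroup P), A ≤ Y → Nat.card A = 8 → A.relIndex Y = 2 := by
    intro A hle hc
    have key := Subgroup.card_mul_index (A.subgroupOf Y)
    have hsub : Nat.card (A.subgroupOf Y) = Nat.card A :=
      Nat.card_congr (Subgroup.subgroupOfEquivOfLe hle).toEquiv
    have : Nat.card A * A.relIndex Y = Nat.card Y := by
      rw [← hsub]; exact key
    rw [hc, cY] at this
    omega
  -- Q1 ≤ Q etc.
  have hxQ : x ∈ Q := Subgroup.subset_closure (Set.mem_insert _ _)
  have hyQ : y ∈ Q := Subgroup.subset_closure (Set.mem_insert_of_mem _ rfl)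
  have hQ1Q : Q1 ≤ Q := by
    rw [Subgroup.closure_le]
    rintro p (rfl | rfl)
    · exact mul_mem hxQ hyQ
    · exact pow_mem hxQ 2
  have hQle : Q ≤ Subgroup.map f KK.S0 := by
    rw [hmQ]; exact Subgroup.map_mono KK.closureQ_le
  have hQ2Q : ¬ Q2 ≤ Q := by
    intro h
    have := hQle (h memg4Q2)
    rw [Subgroup.mem_map_iff_mem hinj] at this
    exact KK.g4_not_S0 this
  have hQ3Q : ¬ Q3 ≤ Q := by
    intro h
    have := hQle (h memg3Q3)
    rw [Subgroup.mem_map_iff_mem hinj] at this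
    exact KK.g3_not_S0 this
  exact ⟨hQ1Q2, hQ1Q3, hQ2Q3, hQ1Y, hQ2Y, hQ3Y,
    relind Q1 hQ1Y c1, relind Q2 hQ2Y c2, relind Q3 hQ3Y c3, hQ1Q, hQ2Q, hQ3Q⟩
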